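/- (Proposition 3.3, lower bound) Let K_w, C_w, c_w be the constants from the hypotheses on W and let q*, ε_0 be the constants from the interpolation inequality applied with A = Ω. Set q_0 := q*/(2q* + 4K_w + 4C_w² + 10). Then there exists ε_1 > 0 (one can take ε_1 := min{ε_0, (c_w/(12 C(Ω)))^{1/4}}, where C(Ω) is the constant from the elliptic estimate on Ω) such that for every 0 < q ≤ q_0, every v ∈ W^{3,2}(Ω), and every 0 < ε < ε_1: F_ε[v] ≥ q I_ε[v; Ω] − (12q/q*) C(Ω) ε³ |Ω|. -/

import Mathlib

set_option maxHeartbeats 1000000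


open MeasureTheory Filter Topology
open scoped RealInnerProductSpace

noncomputable section

abbrev Euc (d : ℕ) := EuclideanSpace ℝ (Fin d)

variable {d : ℕ}

/-- The Laplacian of `v`, as the trace of the second derivative. -/
def lap (v : Euc d → ℝ) (x : Euc d) : ℝ :=
  ∑ i : Fin d, iteratedFDeriv ℝ 2 v x
    ![EuclideanSpace.single i (1:ℝ), EuclideanSpace.single i (1:ℝ)]

/-- `|∇v|²`. -/
def gradSq (v : Euc d → ℝ) (x : Euc d) : ℝ := ‖gradient v x‖ ^ 2

/-- `|∇²v|²` (squared norm of the Hessian). -/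
def hessSq (v : Euc d → ℝ) (x : Euc d) : ℝ := ‖iteratedFDeriv ℝ 2 v x‖ ^ 2

/-- `|∇Δv|²`. -/
def gradLapSq (v : Euc d → ℝ) (x : Euc d) : ℝ := ‖gradient (lap v) x‖ ^ 2

/-- Encoding of membership in the Sobolev space `W^{k,2}(Ω)`:
`v` is `k` times differentiable on `Ω` and all derivatives up to order `k`
are square integrable on `Ω`. -/
def MemW (k : ℕ) (Ω : Set (Euc d)) (v : Euc d → ℝ) : Prop :=
  ContDiffOn ℝ k v Ω ∧
    ∀ j : ℕ, j ≤ k → MemLp (fun x => ‖iteratedFDeriv ℝ j v x‖) 2 (volume.restrict Ω)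

/-- `nrm` is the outward unit normal vector field of `Ω` on its boundary. -/
def OutwardNormal (Ω : Set (Euc d)) (nrm : Euc d → Euc d) : Prop :=
  ∀ x ∈ frontier Ω, ‖nrm x‖ = 1 ∧
    ∀ᶠ t : ℝ in 𝓝[>] 0, x + t • nrm x ∉ closure Ω ∧ x - t • nrm x ∈ Ω

/-- Homogeneous Neumann boundary condition `∂v/∂n = 0` on `∂Ω`. -/
def NeumannBC (Ω : Set (Euc d)) (nrm : Euc d → Euc d) (v : Euc d → ℝ) : Prop :=
  ∀ x ∈ frontier Ω, ⟪gradient v x, nrm x⟫ = 0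

/-- The localized energy `F_ε[v; A]`. -/
def FepsOn (W : ℝ → ℝ) (q ε : ℝ) (v : Euc d → ℝ) (A : Set (Euc d)) : ℝ :=
  ∫ x in A, ((1/ε) * W (-(ε^2) * lap v x + v x) - ε * q * gradSq v x
    + (1 - 2*q) * ε^3 * (lap v x)^2 + (1 - q) * ε^5 * gradLapSq v x)

/-- The auxiliary energy `I_ε[v; A]`. -/
def IepsOn (W : ℝ → ℝ) (ε : ℝ) (v : Euc d → ℝ) (A : Set (Euc d)) : ℝ :=
  ∫ x in A, ((1/ε) * W (v x) + ε * gradSq v x + ε^3 * hessSq v x + ε^5 * gradLapSq v x)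

open Classical in
/-- The total functional `F_ε : L²(Ω) → (-∞, ∞]`, equal to `F_ε[v; Ω]` when
`v ∈ W^{3,2}(Ω)` with Neumann boundary conditions, and `+∞` otherwise. -/
def Feps (W : ℝ → ℝ) (q ε : ℝ) (Ω : Set (Euc d)) (nrm : Euc d → Euc d)
    (v : Euc d → ℝ) : EReal :=
  if MemW 3 Ω v ∧ NeumannBC Ω nrm v then ((FepsOn W q ε v Ω : ℝ) : EReal) else ⊤

/-- Hypotheses on the double-well potential `W`. -/
structure DoubleWell (W : ℝ → ℝ) (cw Kw Cw : ℝ) : Prop where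
  smooth : ContDiff ℝ 2 W
  pos : ∀ s : ℝ, s ≠ 1 → s ≠ -1 → 0 < W s
  zero_one : W 1 = 0
  zero_negone : W (-1) = 0
  cw_pos : 0 < cw
  lb_right : ∀ s : ℝ, 0 ≤ s → cw * (s - 1)^2 ≤ W s
  lb_left : ∀ s : ℝ, s ≤ 0 → cw * (s + 1)^2 ≤ W s
  Kw_pos : 0 < Kw
  Cw_pos : 0 < Cw
  deriv_bound : ∀ s : ℝ, |deriv W s| ≤ Cw * Real.sqrt (W s)
  deriv2_bound : ∀ s : ℝ, |deriv (deriv W) s| ≤ Kw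

/-- Divergence of a vector field. -/
def divg (φ : Euc d → Euc d) (x : Euc d) : ℝ :=
  ∑ i : Fin d, ⟪fderiv ℝ φ x (EuclideanSpace.single i (1:ℝ)),
    EuclideanSpace.single i (1:ℝ)⟫

/-- The set of values `∫_{E ∩ Ω} div φ` over admissible test vector fields,
used to define the perimeter of `E` in `Ω`. -/
def divSet (Ω E : Set (Euc d)) : Set ℝ :=
  {r | ∃ φ : Euc d → Euc d, ContDiff ℝ 1 φ ∧ HasCompactSupport φ ∧ tsupport φ ⊆ Ω ∧
      (∀ x, ‖φ x‖ ≤ 1) ∧ r = ∫ x in E ∩ Ω, divg φ x}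

/-- `E` has finite perimeter in `Ω`. -/
def FinitePerimeter (Ω E : Set (Euc d)) : Prop := BddAbove (divSet Ω E)

/-- The perimeter `Per_Ω(E)`. -/
def perim (Ω E : Set (Euc d)) : ℝ := sSup (divSet Ω E)

/-- `v ∈ BV(Ω; {−1, 1})`. -/
def BVpm (Ω : Set (Euc d)) (v : Euc d → ℝ) : Prop :=
  (∀ x ∈ Ω, v x = 1 ∨ v x = -1) ∧ FinitePerimeter Ω {x | v x = 1}

open Classical in
/-- The limiting functional `F[v] = m_d Per_Ω({v = 1})` on `BV(Ω; {±1})`, `+∞` otherwise. -/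
def limitF (md : ℝ) (Ω : Set (Euc d)) (v : Euc d → ℝ) : EReal :=
  if BVpm Ω v then (((md * perim Ω {x | v x = 1}) : ℝ) : EReal) else ⊤

/-- The open unit cube `Q` centered at the origin. -/
def unitCube (d : ℕ) : Set (Euc d) := {x | ∀ i, |x i| < 1/2}

/-- The open cube `Q(x₀, r)` centered at `x₀` of side `r`. -/
def cubeAt (x0 : Euc d) (r : ℝ) : Set (Euc d) := {x | ∀ i, |x i - x0 i| < r/2}

/-- The admissible class `A_ν` for `ν = e_j` (axis direction `j`):
`W^{3,2}_loc` functions, equal to `1` near `{x_j = -1/2}`, to `-1` near `{x_j = 1/2}`,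
and periodic in the remaining directions. -/
def Admissible (d : ℕ) (j : Fin d) (v : Euc d → ℝ) : Prop :=
  ContDiff ℝ 3 v ∧
  (∃ δ > (0:ℝ), ∀ x : Euc d, |x j + 1/2| < δ → v x = 1) ∧
  (∃ δ > (0:ℝ), ∀ x : Euc d, |x j - 1/2| < δ → v x = -1) ∧
  (∀ i : Fin d, i ≠ j → ∀ x : Euc d, v (x + EuclideanSpace.single i (1:ℝ)) = v x)

/-- The surface energy density `m_d`. -/
def mdConst (W : ℝ → ℝ) (q : ℝ) (d : ℕ) (j : Fin d) : ℝ :=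
  sInf {r | ∃ ε v, 0 < ε ∧ ε ≤ 1 ∧ Admissible d j v ∧ r = FepsOn W q ε v (unitCube d)}

/-- The open cube `Q_ν(0, r)` adapted to the orthonormal basis `b`. -/
def cubeB (b : OrthonormalBasis (Fin d) ℝ (Euc d)) (r : ℝ) : Set (Euc d) :=
  {x | ∀ i, |⟪x, b i⟫| < r/2}

/-- The admissible class `A_ν` for `ν = b j`. -/
def AdmissibleB (b : OrthonormalBasis (Fin d) ℝ (Euc d)) (j : Fin d) (v : Euc d → ℝ) : Prop :=
  ContDiff ℝ 3 v ∧
  (∃ δ > (0:ℝ), ∀ x : Euc d, |⟪x, b j⟫ + 1/2| < δ → v x = 1) ∧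
  (∃ δ > (0:ℝ), ∀ x : Euc d, |⟪x, b j⟫ - 1/2| < δ → v x = -1) ∧
  (∀ i : Fin d, i ≠ j → ∀ x : Euc d, v (x + b i) = v x)

/-- The surface energy density `m_d` defined through the cube `Q_ν`, `ν = b j`. -/
def mdB (W : ℝ → ℝ) (q : ℝ) (b : OrthonormalBasis (Fin d) ℝ (Euc d)) (j : Fin d) : ℝ :=
  sInf {r | ∃ ε v, 0 < ε ∧ ε ≤ 1 ∧ AdmissibleB b j v ∧ r = FepsOn W q ε v (cubeB b 1)}

/-- Open coordinate boxes (rectangles). -/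
def IsOpenBox (S : Set (Euc d)) : Prop :=
  ∃ a b : Fin d → ℝ, S = {x : Euc d | ∀ i, x i ∈ Set.Ioo (a i) (b i)}

/-- `A` has a `C¹` boundary (encoded through a continuous outward unit normal field). -/
def HasC1Boundary (A : Set (Euc d)) : Prop :=
  ∃ nrm : Euc d → Euc d, OutwardNormal A nrm ∧ ContinuousOn nrm (frontier A)

/-- `A` is a union of finitely many pairwise disjoint open rectangles and a null set. -/
def IsRectUnion (A : Set (Euc d)) : Prop :=
  ∃ (m : ℕ) (R : Fin m → Set (Euc d)) (N : Set (Euc d)),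
    (∀ i, IsOpenBox (R i)) ∧ Pairwise (Function.onFun Disjoint R) ∧ volume N = 0 ∧
    A = (⋃ i, R i) ∪ N

/-- The nonlocal functional `F*_ε[u]`, expressed with the resolvent `vres = (1-ε²Δ)⁻¹u`. -/
def FstarOn (W : ℝ → ℝ) (q ε : ℝ) (Ω : Set (Euc d)) (u vres : Euc d → ℝ) : ℝ :=
  (1/ε) * ∫ x in Ω, (W (u x) - (u x)^2 + (1-q) * ε^2 * gradSq u x + u x * vres x)




lemma norm_gradient_eq (f : Euc d → ℝ) (x : Euc d) : ‖gradient f x‖ = ‖fderiv ℝ f x‖ := by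
  rw [gradient]
  exact LinearIsometryEquiv.norm_map _ _

lemma norm_iFD1 (f : Euc d → ℝ) (x : Euc d) : ‖iteratedFDeriv ℝ 1 f x‖ = ‖fderiv ℝ f x‖ := by
  rw [← norm_iteratedFDeriv_fderiv (n := 0), norm_iteratedFDeriv_zero]

lemma abs_lap_le (v : Euc d → ℝ) (x : Euc d) : |lap v x| ≤ d * ‖iteratedFDeriv ℝ 2 v x‖ := by
  refine le_trans (Finset.abs_sum_le_sum_abs _ _) ?_
  have h : ∀ i : Fin d, |iteratedFDeriv ℝ 2 v x
      ![EuclideanSpace.single i (1:ℝ), EuclideanSpace.single i (1:ℝ)]| ≤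
      ‖iteratedFDeriv ℝ 2 v x‖ := by
    intro i
    have := (iteratedFDeriv ℝ 2 v x).le_opNorm
      ![EuclideanSpace.single i (1:ℝ), EuclideanSpace.single i (1:ℝ)]
    simpa [Fin.prod_univ_two, EuclideanSpace.norm_single] using this
  calc ∑ i : Fin d, |iteratedFDeriv ℝ 2 v x
        ![EuclideanSpace.single i (1:ℝ), EuclideanSpace.single i (1:ℝ)]|
      ≤ ∑ _i : Fin d, ‖iteratedFDeriv ℝ 2 v x‖ := Finset.sum_le_sum fun i _ => h i
    _ = d * ‖iteratedFDeriv ℝ 2 v x‖ := by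
        simp [Finset.sum_const, nsmul_eq_mul]

lemma measurable_lap (v : Euc d → ℝ) : Measurable (lap v) := by
  unfold lap
  refine Finset.measurable_sum _ fun i _ => ?_
  set e := EuclideanSpace.single i (1:ℝ)
  have h : (fun x => iteratedFDeriv ℝ 2 v x ![e, e]) = fun x =>
      ((ContinuousMultilinearMap.apply ℝ (fun _ : Fin 1 => Euc d) ℝ (Fin.tail ![e, e])).comp
        (ContinuousLinearMap.apply ℝ (ContinuousMultilinearMap ℝ (fun _ : Fin 1 => Euc d) ℝ)
          ((![e, e]) 0)))
        (fderiv ℝ (iteratedFDeriv ℝ 1 v) x) := rfl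
  rw [h]
  exact (ContinuousLinearMap.continuous _).measurable.comp (measurable_fderiv _ _)

lemma measurable_gradient_fn (f : Euc d → ℝ) : Measurable (gradient f) := by
  have h : gradient f = fun x => (InnerProductSpace.toDual ℝ (Euc d)).symm (fderiv ℝ f x) := rfl
  rw [h]
  exact (LinearIsometryEquiv.continuous _).measurable.comp (measurable_fderiv _ _)

lemma gradLap_le {Ω : Set (Euc d)} (hΩ : IsOpen Ω) {v : Euc d → ℝ}
    (hv : ContDiffOn ℝ 3 v Ω) {x : Euc d} (hx : x ∈ Ω) :
    ‖gradient (lap v) x‖ ≤ d * ‖iteratedFDeriv ℝ 3 v x‖ := by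
  have hd2 : DifferentiableAt ℝ (iteratedFDeriv ℝ 2 v) x := by
    have h1 : DifferentiableOn ℝ (iteratedFDerivWithin ℝ 2 v Ω) Ω :=
      hv.differentiableOn_iteratedFDerivWithin (by norm_num) hΩ.uniqueDiffOn
    have h2 : DifferentiableAt ℝ (iteratedFDerivWithin ℝ 2 v Ω) x :=
      (h1 x hx).differentiableAt (hΩ.mem_nhds hx)
    have heq : iteratedFDerivWithin ℝ 2 v Ω =ᶠ[𝓝 x] iteratedFDeriv ℝ 2 v :=
      Filter.eventuallyEq_of_mem (hΩ.mem_nhds hx) (iteratedFDerivWithin_of_isOpen 2 hΩ)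
    exact h2.congr_of_eventuallyEq heq.symm
  set e : Fin d → Euc d := fun i => EuclideanSpace.single i (1:ℝ) with he
  have hsum : HasFDerivAt (lap v)
      (∑ i : Fin d, (ContinuousMultilinearMap.apply ℝ (fun _ : Fin 2 => Euc d) ℝ
          ![e i, e i]).comp (fderiv ℝ (iteratedFDeriv ℝ 2 v) x)) x := by
    have hco : ∀ i : Fin d, HasFDerivAt
        (fun y => iteratedFDeriv ℝ 2 v y ![e i, e i])
        ((ContinuousMultilinearMap.apply ℝ (fun _ : Fin 2 => Euc d) ℝ ![e i, e i]).comp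
          (fderiv ℝ (iteratedFDeriv ℝ 2 v) x)) x := fun i =>
      ((ContinuousMultilinearMap.apply ℝ (fun _ : Fin 2 => Euc d) ℝ
          ![e i, e i]).hasFDerivAt).comp x hd2.hasFDerivAt
    exact HasFDerivAt.fun_sum fun i _ => hco i
  rw [norm_gradient_eq, hsum.fderiv]
  refine le_trans (norm_sum_le _ _) ?_
  have hterm : ∀ i : Fin d,
      ‖(ContinuousMultilinearMap.apply ℝ (fun _ : Fin 2 => Euc d) ℝ ![e i, e i]).comp
        (fderiv ℝ (iteratedFDeriv ℝ 2 v) x)‖ ≤ ‖iteratedFDeriv ℝ 3 v x‖ := by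
    intro i
    refine ContinuousLinearMap.opNorm_le_bound _ (norm_nonneg _) fun w => ?_
    have h1 : ‖(fderiv ℝ (iteratedFDeriv ℝ 2 v) x w) ![e i, e i]‖ ≤
        ‖fderiv ℝ (iteratedFDeriv ℝ 2 v) x w‖ := by
      have := (fderiv ℝ (iteratedFDeriv ℝ 2 v) x w).le_opNorm ![e i, e i]
      simpa [he, Fin.prod_univ_two, EuclideanSpace.norm_single] using this
    have h2 : ‖fderiv ℝ (iteratedFDeriv ℝ 2 v) x w‖ ≤
        ‖fderiv ℝ (iteratedFDeriv ℝ 2 v) x‖ * ‖w‖ :=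
      (fderiv ℝ (iteratedFDeriv ℝ 2 v) x).le_opNorm w
    calc ‖((ContinuousMultilinearMap.apply ℝ (fun _ : Fin 2 => Euc d) ℝ ![e i, e i]).comp
          (fderiv ℝ (iteratedFDeriv ℝ 2 v) x)) w‖
        = ‖(fderiv ℝ (iteratedFDeriv ℝ 2 v) x w) ![e i, e i]‖ := rfl
      _ ≤ ‖fderiv ℝ (iteratedFDeriv ℝ 2 v) x‖ * ‖w‖ := le_trans h1 h2
      _ = ‖iteratedFDeriv ℝ 3 v x‖ * ‖w‖ := by rw [norm_fderiv_iteratedFDeriv]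
  calc ∑ i : Fin d, ‖(ContinuousMultilinearMap.apply ℝ (fun _ : Fin 2 => Euc d) ℝ
        ![e i, e i]).comp (fderiv ℝ (iteratedFDeriv ℝ 2 v) x)‖
      ≤ ∑ _i : Fin d, ‖iteratedFDeriv ℝ 3 v x‖ := Finset.sum_le_sum fun i _ => hterm i
    _ = d * ‖iteratedFDeriv ℝ 3 v x‖ := by simp [Finset.sum_const, nsmul_eq_mul]


lemma dw_nonneg {W : ℝ → ℝ} {cw Kw Cw : ℝ} (hW : DoubleWell W cw Kw Cw) (s : ℝ) : 0 ≤ W s := by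
  rcases eq_or_ne s 1 with rfl | h1
  · exact le_of_eq hW.zero_one.symm
  rcases eq_or_ne s (-1) with rfl | h2
  · exact le_of_eq hW.zero_negone.symm
  exact (hW.pos s h1 h2).le

lemma dw_taylor {W : ℝ → ℝ} {cw Kw Cw : ℝ} (hW : DoubleWell W cw Kw Cw) (a b : ℝ) :
    W b ≤ W a + |deriv W a| * |b - a| + Kw/2 * (b - a)^2 := by
  have hW1 : Differentiable ℝ W := hW.smooth.differentiable (by norm_num)
  have hW2 : Differentiable ℝ (deriv W) :=
    (hW.smooth.iterate_deriv' 1 1).differentiable (by norm_num)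
  have hlip : ∀ x y : ℝ, |deriv W x - deriv W y| ≤ Kw * |x - y| := by
    intro x y
    have h := Convex.norm_image_sub_le_of_norm_deriv_le (f := deriv W) (s := Set.univ)
      (fun z _ => (hW2 z)) (fun z _ => hW.deriv2_bound z) convex_univ
      (Set.mem_univ y) (Set.mem_univ x)
    simpa [Real.norm_eq_abs] using h
  set c := b - a with hc
  set g : ℝ → ℝ := fun t => W (a + t*c) - t*(|deriv W a| * |c|) - Kw/2*c^2*t^2 with hg
  have hgd : ∀ t : ℝ, HasDerivAt g
      (deriv W (a + t*c)*c - |deriv W a| * |c| - Kw/2*c^2*(2*t^1)) t := by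
    intro t
    have h1 : HasDerivAt (fun t : ℝ => a + t*c) c t := by
      simpa using ((hasDerivAt_id t).mul_const c).const_add a
    have h2 : HasDerivAt (fun t : ℝ => W (a + t*c)) (deriv W (a + t*c) * c) t :=
      (hW1 (a + t*c)).hasDerivAt.comp t h1
    have h3 : HasDerivAt (fun t : ℝ => t*(|deriv W a| * |c|)) (|deriv W a| * |c|) t := by
      simpa using (hasDerivAt_id t).mul_const (|deriv W a| * |c|)
    have h4 : HasDerivAt (fun t : ℝ => Kw/2*c^2*t^2) (Kw/2*c^2*(2*t^1)) t :=
      (hasDerivAt_pow 2 t).const_mul (Kw/2*c^2)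
    exact (h2.sub h3).sub h4
  have hganti : AntitoneOn g (Set.Icc 0 1) := by
    refine antitoneOn_of_deriv_nonpos (convex_Icc 0 1) ?_ ?_ ?_
    · have hgdiff : Differentiable ℝ g := fun t => (hgd t).differentiableAt
      exact hgdiff.continuous.continuousOn
    · exact fun t _ => (hgd t).differentiableAt.differentiableWithinAt
    · intro t ht
      rw [interior_Icc] at ht
      rw [(hgd t).deriv]
      have hL := hlip (a + t*c) a
      have habs : |a + t*c - a| = t* |c| := by
        rw [show a + t*c - a = t*c by ring, abs_mul, abs_of_pos ht.1]
      rw [habs] at hL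
      have hb1 : deriv W (a + t*c) * c ≤ |deriv W (a + t*c)| * |c| := by
        calc deriv W (a + t*c) * c ≤ |deriv W (a + t*c) * c| := le_abs_self _
          _ = |deriv W (a + t*c)| * |c| := abs_mul _ _
      have hb2 : |deriv W (a + t*c)| ≤ |deriv W a| + Kw*(t* |c|) := by
        have := abs_sub_abs_le_abs_sub (deriv W (a + t*c)) (deriv W a)
        linarith
      have hcc : |c| * |c| = c^2 := by rw [← sq_abs c]; ring
      have hb3 : |deriv W (a + t*c)| * |c| ≤ |deriv W a| * |c| + Kw * t * c^2 := by
        have h5 := mul_le_mul_of_nonneg_right hb2 (abs_nonneg c)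
        have e2 : (|deriv W a| + Kw * (t * |c|)) * |c| = |deriv W a| * |c| + Kw*t*(|c| * |c|) := by
          ring
        rw [e2, hcc] at h5
        exact h5
      have e3 : Kw/2*c^2*(2*t^1) = Kw*t*c^2 := by ring
      rw [e3]
      linarith [hb1, hb3]
  have hkey := hganti (Set.left_mem_Icc.2 zero_le_one) (Set.right_mem_Icc.2 zero_le_one)
    zero_le_one
  have hg0 : g 0 = W a := by simp [hg]
  have hg1 : g 1 = W b - |deriv W a| * |c| - Kw/2*c^2 := by
    simp only [hg]
    rw [show a + 1*c = b by rw [hc]; ring]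
    ring
  rw [hg0, hg1] at hkey
  linarith [hkey]

lemma dw_upper {W : ℝ → ℝ} {cw Kw Cw : ℝ} (hW : DoubleWell W cw Kw Cw) (s t : ℝ) :
    W s ≤ 3/2 * W t + (Cw^2 + Kw)/2 * (s - t)^2 := by
  have h1 := dw_taylor hW t s
  have h2 := hW.deriv_bound t
  have h3 : |deriv W t| * |s - t| ≤ Cw * Real.sqrt (W t) * |s - t| :=
    mul_le_mul_of_nonneg_right h2 (abs_nonneg _)
  have h4 : Real.sqrt (W t) ^ 2 = W t := Real.sq_sqrt (dw_nonneg hW t)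
  have h5 : |s - t|^2 = (s - t)^2 := sq_abs _
  nlinarith [sq_nonneg (Real.sqrt (W t) - Cw * |s - t|), Real.sqrt_nonneg (W t),
    abs_nonneg (s - t), hW.Cw_pos.le, hW.Kw_pos.le]

lemma dw_sq_le {W : ℝ → ℝ} {cw Kw Cw : ℝ} (hW : DoubleWell W cw Kw Cw) (s : ℝ) :
    s^2 ≤ 2/cw * W s + 2 := by
  have hcw := hW.cw_pos
  rcases le_total 0 s with h | h
  · have hb := hW.lb_right s h
    have h2 : 2/cw * (cw*(s-1)^2) ≤ 2/cw * W s :=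
      mul_le_mul_of_nonneg_left hb (by positivity)
    have e : 2/cw*(cw*(s-1)^2) = 2*(s-1)^2 := by field_simp
    nlinarith [sq_nonneg (s-2)]
  · have hb := hW.lb_left s h
    have h2 : 2/cw * (cw*(s+1)^2) ≤ 2/cw * W s :=
      mul_le_mul_of_nonneg_left hb (by positivity)
    have e : 2/cw*(cw*(s+1)^2) = 2*(s+1)^2 := by field_simp
    nlinarith [sq_nonneg (s+2)]


lemma key_arith (qstar q ε CΩ cw Kw Cw m A a b h L G V : ℝ)
    (hqs0 : 0 < qstar) (hqs1 : qstar < 1) (hq : 0 < q) (hCΩ : 0 < CΩ) (hcw : 0 < cw)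
    (hKw : 0 < Kw) (hε : 0 < ε)
    (hq0 : q ≤ qstar / (2*qstar + 4*Kw + 4*Cw^2 + 10))
    (hm : 0 ≤ m) (hA : 0 ≤ A) (ha : 0 ≤ a) (hb : 0 ≤ b) (hh : 0 ≤ h) (hL : 0 ≤ L)
    (hG : 0 ≤ G) (hV : 0 ≤ V)
    (h1 : a ≤ 3/2*A + ((Cw^2+Kw)/2*ε^4)*L)
    (h2 : qstar * (ε*b) ≤ a/ε + ε^3*h)
    (h3 : h ≤ 3*L + CΩ*V)
    (h4 : V ≤ 2/cw*a + 2*m)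
    (h5 : CΩ*ε^4 ≤ cw/12) :
    q * (1/ε*a + ε*b + ε^3*h + ε^5*G) - 12*q/qstar*CΩ*ε^3*m ≤
      1/ε*A - ε*q*b + (1-2*q)*ε^3*L + (1-q)*ε^5*G := by
  set r := q / qstar with hr
  set D := 2*qstar + 4*Kw + 4*Cw^2 + 10 with hD
  have hD0 : 0 < D := by positivity
  have hrpos : 0 ≤ r := by positivity
  have hq_eq : q = r * qstar := by rw [hr]; field_simp
  have hrD : r ≤ 1/D := by
    rw [hr, div_le_div_iff₀ hqs0 hD0]
    have := (le_div_iff₀ hD0).mp hq0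
    linarith
  have hrDm : r * D ≤ 1 := (le_div_iff₀ hD0).mp hrD
  have hqr : q ≤ r := by nlinarith
  have hq12 : q ≤ 1/2 := by nlinarith [hKw.le, sq_nonneg Cw, hqs0.le]
  -- multiplied interpolation
  have h2' : qstar*(ε^2*b) ≤ a + ε^4*h := by
    have hh2 := mul_le_mul_of_nonneg_right h2 hε.le
    have e1 : qstar*(ε*b)*ε = qstar*(ε^2*b) := by ring
    have e2 : (a/ε + ε^3*h)*ε = a + ε^4*h := by field_simp
    rw [e1, e2] at hh2
    exact hh2
  have P1 : 2*q*(ε^2*b) ≤ 2*r*a + 2*r*(ε^4*h) := by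
    have := mul_le_mul_of_nonneg_left h2' (by positivity : (0:ℝ) ≤ 2*r)
    calc 2*q*(ε^2*b) = 2*r*(qstar*(ε^2*b)) := by rw [hq_eq]; ring
      _ ≤ 2*r*(a + ε^4*h) := this
      _ = 2*r*a + 2*r*(ε^4*h) := by ring
  have P2 : q*a ≤ r*a := mul_le_mul_of_nonneg_right hqr ha
  have hε4h : 0 ≤ ε^4*h := by positivity
  have P3 : q*(ε^4*h) ≤ r*(ε^4*h) := mul_le_mul_of_nonneg_right hqr hε4h
  have hS3 : ε^4*h ≤ 3*(ε^4*L) + 1/6*a + 2*(CΩ*ε^4)*m := by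
    have t1 : ε^4*h ≤ ε^4*(3*L + CΩ*V) := mul_le_mul_of_nonneg_left h3 (by positivity)
    have t2 : (CΩ*ε^4)*V ≤ (CΩ*ε^4)*(2/cw*a + 2*m) :=
      mul_le_mul_of_nonneg_left h4 (by positivity)
    have t3 : (CΩ*ε^4)*(2/cw*a) ≤ 1/6*a := by
      have u1 : (CΩ*ε^4)*(2/cw) ≤ (cw/12)*(2/cw) :=
        mul_le_mul_of_nonneg_right h5 (by positivity)
      have u2 : (cw/12)*(2/cw) = 1/6 := by field_simp; ring
      rw [u2] at u1
      have := mul_le_mul_of_nonneg_right u1 ha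
      calc (CΩ*ε^4)*(2/cw*a) = ((CΩ*ε^4)*(2/cw))*a := by ring
        _ ≤ 1/6*a := this
    linarith [t1, t2, t3]
  have P4 : 3*r*(ε^4*h) ≤ 3*r*(3*(ε^4*L) + 1/6*a + 2*(CΩ*ε^4)*m) :=
    mul_le_mul_of_nonneg_left hS3 (by positivity)
  have P5 : (7/2*r)*a ≤ (7/2*r)*(3/2*A + ((Cw^2+Kw)/2*ε^4)*L) :=
    mul_le_mul_of_nonneg_left h1 (by positivity)
  have hc1 : 7/4*(Cw^2+Kw)+9+2*qstar ≤ D := by nlinarith [hKw, sq_nonneg Cw]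
  have hcoef2 : (7/4*(Cw^2+Kw)+9)*r + 2*q ≤ 1 := by
    have s1 : (7/4*(Cw^2+Kw)+9+2*qstar)*r ≤ D*r := mul_le_mul_of_nonneg_right hc1 hrpos
    have : 2*q = 2*(r*qstar) := by rw [hq_eq]
    nlinarith [s1, hrDm]
  have hε4L : 0 ≤ ε^4*L := by positivity
  have P6 : ((7/4*(Cw^2+Kw)+9)*r)*(ε^4*L) ≤ (1-2*q)*(ε^4*L) :=
    mul_le_mul_of_nonneg_right (by linarith) hε4L
  have hr21 : 21/4*r ≤ 1 := by nlinarith [hrDm, hrpos, hqs0.le, hKw.le, sq_nonneg Cw]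
  have P7 : (21/4*r)*A ≤ 1*A := mul_le_mul_of_nonneg_right hr21 hA
  have P8 : 6*r*((CΩ*ε^4)*m) ≤ 12*r*((CΩ*ε^4)*m) := by
    nlinarith [mul_nonneg hrpos (mul_nonneg (by positivity : (0:ℝ) ≤ CΩ*ε^4) hm)]
  have hε6G : 0 ≤ ε^6*G := by positivity
  have P9 : (2*q-1)*(ε^6*G) ≤ 0 :=
    mul_nonpos_of_nonpos_of_nonneg (by linarith) hε6G
  -- clear the 1/ε by multiplying through
  refine le_of_mul_le_mul_right ?_ hε
  have e1 : (q * (1/ε*a + ε*b + ε^3*h + ε^5*G) - 12*q/qstar*CΩ*ε^3*m)*ε =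
      q*a + q*(ε^2*b) + q*(ε^4*h) + q*(ε^6*G) - 12*r*((CΩ*ε^4)*m) := by
    rw [hr]; field_simp
  have e2 : (1/ε*A - ε*q*b + (1-2*q)*ε^3*L + (1-q)*ε^5*G)*ε =
      A - q*(ε^2*b) + (1-2*q)*(ε^4*L) + (1-q)*(ε^6*G) := by
    field_simp
  rw [e1, e2]
  linarith [P1, P2, P3, P4, P5, P6, P7, P8, P9]


/-- **Lower bound (Proposition 3.3).** Let `q*`, `ε₀` be the constants from the
interpolation inequality on `Ω` and `C(Ω)` the constant from the elliptic estimate.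
Set `q₀ := q*/(2q* + 4K_w + 4C_w² + 10)`. Then there exists `ε₁ > 0` such that for every
`0 < q ≤ q₀`, every `v ∈ W^{3,2}(Ω)`, and every `0 < ε < ε₁`,
`F_ε[v] ≥ q I_ε[v; Ω] − (12q/q*) C(Ω) ε³ |Ω|`. -/
theorem lower_bound
    {d : ℕ} (hd : 2 ≤ d)
    (W : ℝ → ℝ) (cw Kw Cw : ℝ) (hW : DoubleWell W cw Kw Cw)
    (Ω : Set (Euc d)) (nrm : Euc d → Euc d)
    (hΩo : IsOpen Ω) (hΩb : Bornology.IsBounded Ω) (hnrm : OutwardNormal Ω nrm)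
    (qstar ε0 CΩ : ℝ) (hqs0 : 0 < qstar) (hqs1 : qstar < 1) (hε0 : 0 < ε0) (hCΩ : 0 < CΩ)
    (hinterp : ∀ ε : ℝ, 0 < ε → ε < ε0 → ∀ v : Euc d → ℝ, MemW 2 Ω v →
      qstar * ∫ x in Ω, ε * gradSq v x ≤ ∫ x in Ω, (W (v x) / ε + ε^3 * hessSq v x))
    (helliptic : ∀ v : Euc d → ℝ, MemW 2 Ω v → NeumannBC Ω nrm v →
      ∫ x in Ω, hessSq v x ≤ 3 * (∫ x in Ω, (lap v x)^2) + CΩ * ∫ x in Ω, (v x)^2) :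
    ∃ ε1 : ℝ, 0 < ε1 ∧
      ∀ q : ℝ, 0 < q → q ≤ qstar / (2*qstar + 4*Kw + 4*Cw^2 + 10) →
      ∀ v : Euc d → ℝ, MemW 3 Ω v →
      ∀ ε : ℝ, 0 < ε → ε < ε1 →
        ((q * IepsOn W ε v Ω - (12*q/qstar) * CΩ * ε^3 * (volume Ω).toReal : ℝ) : EReal) ≤
          Feps W q ε Ω nrm v := by

  classical
  set t0 : ℝ := (cw/(12*CΩ))^((1:ℝ)/4) with ht0
  have hcw := hW.cw_pos
  have ht0pos : 0 < t0 := Real.rpow_pos_of_pos (by positivity) _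
  refine ⟨min ε0 t0, lt_min hε0 ht0pos, ?_⟩
  intro q hq hq0 v hv ε hε hεlt
  have hεe0 : ε < ε0 := lt_of_lt_of_le hεlt (min_le_left _ _)
  have hεt0 : ε ≤ t0 := le_of_lt (lt_of_lt_of_le hεlt (min_le_right _ _))
  by_cases hNB : NeumannBC Ω nrm v
  swap
  · rw [Feps, if_neg (fun hcon => hNB hcon.2)]
    exact le_top
  rw [Feps, if_pos ⟨hv, hNB⟩]
  rw [EReal.coe_le_coe_iff]
  -- setup
  have hΩm : MeasurableSet Ω := hΩo.measurableSet
  have hfin : volume Ω < ⊤ := hΩb.measure_lt_top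
  haveI : IsFiniteMeasure (volume.restrict Ω) := ⟨by rwa [Measure.restrict_apply_univ]⟩
  have hv2 : MemW 2 Ω v := ⟨hv.1.of_le (by norm_num), fun j hj => hv.2 j (by omega)⟩
  have hj0 := hv.2 0 (by norm_num)
  have hj1 := hv.2 1 (by norm_num)
  have hj2 := hv.2 2 (by norm_num)
  have hj3 := hv.2 3 le_rfl
  have hc1nn : (0:ℝ) ≤ (Cw^2+Kw)/2 := by nlinarith [hW.Kw_pos, sq_nonneg Cw]
  have hvmeas : AEMeasurable v (volume.restrict Ω) := hv.1.continuousOn.aemeasurable hΩm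
  -- integrability
  have hInt_v2 : Integrable (fun x => (v x)^2) (volume.restrict Ω) := by
    have h0 := hj0.integrable_sq
    simpa [norm_iteratedFDeriv_zero, Real.norm_eq_abs, sq_abs] using h0
  have hInt_h : Integrable (fun x => hessSq v x) (volume.restrict Ω) := by
    simpa [hessSq] using hj2.integrable_sq
  have hInt_b : Integrable (fun x => gradSq v x) (volume.restrict Ω) := by
    have h1 := hj1.integrable_sq
    have e : (fun x => gradSq v x) = fun x => ‖iteratedFDeriv ℝ 1 v x‖^2 :=
      funext fun x => by rw [gradSq, norm_gradient_eq, norm_iFD1]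
    rw [e]; exact h1
  have hInt_L : Integrable (fun x => (lap v x)^2) (volume.restrict Ω) := by
    refine (hInt_h.const_mul ((d:ℝ)^2)).mono'
      (((measurable_lap v).pow_const 2).aestronglyMeasurable) ?_
    refine Filter.Eventually.of_forall fun x => ?_
    have h := abs_lap_le v x
    have e : ‖(lap v x)^2‖ = |lap v x|^2 := by
      rw [Real.norm_eq_abs, abs_of_nonneg (sq_nonneg _), ← sq_abs]
    rw [e]
    calc |lap v x|^2 ≤ ((d:ℝ) * ‖iteratedFDeriv ℝ 2 v x‖)^2 :=
          pow_le_pow_left₀ (abs_nonneg _) h 2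
      _ = (d:ℝ)^2 * hessSq v x := by rw [mul_pow, hessSq]
  have hInt_G : Integrable (fun x => gradLapSq v x) (volume.restrict Ω) := by
    refine ((hj3.integrable_sq).const_mul ((d:ℝ)^2)).mono'
      ((((measurable_gradient_fn (lap v)).norm).pow_const 2).aestronglyMeasurable) ?_
    filter_upwards [ae_restrict_mem hΩm] with x hx
    have h := gradLap_le hΩo hv.1 hx
    have e : ‖gradLapSq v x‖ = ‖gradient (lap v) x‖^2 := by
      rw [gradLapSq, Real.norm_eq_abs, abs_of_nonneg (sq_nonneg _)]
    rw [e]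
    calc ‖gradient (lap v) x‖^2 ≤ ((d:ℝ) * ‖iteratedFDeriv ℝ 3 v x‖)^2 :=
          pow_le_pow_left₀ (norm_nonneg _) h 2
      _ = (d:ℝ)^2 * ‖iteratedFDeriv ℝ 3 v x‖^2 := by rw [mul_pow]
  have hInt_a : Integrable (fun x => W (v x)) (volume.restrict Ω) := by
    have hg : Integrable (fun x => 3/2 * W 0 + (Cw^2+Kw)/2 * (v x)^2) (volume.restrict Ω) :=
      (integrable_const _).add (hInt_v2.const_mul _)
    refine hg.mono' ((hW.smooth.continuous.measurable.comp_aemeasurable hvmeas).aestronglyMeasurable) ?_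
    refine Filter.Eventually.of_forall fun x => ?_
    rw [Real.norm_eq_abs, abs_of_nonneg (dw_nonneg hW _)]
    have h := dw_upper hW (v x) 0
    have e : (v x - 0)^2 = (v x)^2 := by ring
    rw [e] at h
    exact h
  have hInt_A : Integrable (fun x => W (-(ε^2) * lap v x + v x)) (volume.restrict Ω) := by
    have humeas : AEMeasurable (fun x => -(ε^2) * lap v x + v x) (volume.restrict Ω) :=
      ((measurable_lap v).aemeasurable.const_mul (-(ε^2))).add hvmeas
    have hg : Integrable (fun x => 3/2 * W 0 +
        (Cw^2+Kw)/2 * (2*(v x)^2 + 2*ε^4*(lap v x)^2)) (volume.restrict Ω) :=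
      (integrable_const _).add
        (((hInt_v2.const_mul 2).add (hInt_L.const_mul (2*ε^4))).const_mul _)
    refine hg.mono' ((hW.smooth.continuous.measurable.comp_aemeasurable humeas).aestronglyMeasurable) ?_
    refine Filter.Eventually.of_forall fun x => ?_
    rw [Real.norm_eq_abs, abs_of_nonneg (dw_nonneg hW _)]
    have h := dw_upper hW (-(ε^2) * lap v x + v x) 0
    have e : (-(ε^2) * lap v x + v x - 0)^2 = (-(ε^2) * lap v x + v x)^2 := by ring
    rw [e] at h
    have hu2 : (-(ε^2) * lap v x + v x)^2 ≤ 2*(v x)^2 + 2*ε^4*(lap v x)^2 := by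
      nlinarith [sq_nonneg (v x + ε^2 * lap v x)]
    have := mul_le_mul_of_nonneg_left hu2 hc1nn
    linarith
  -- splitting the functionals
  have hF : FepsOn W q ε v Ω =
      1/ε*(∫ x in Ω, W (-(ε^2) * lap v x + v x)) - ε*q*(∫ x in Ω, gradSq v x)
        + (1-2*q)*ε^3*(∫ x in Ω, (lap v x)^2) + (1-q)*ε^5*(∫ x in Ω, gradLapSq v x) := by
    have hf1 := hInt_A.const_mul (1/ε)
    have hf2 := hInt_b.const_mul (ε*q)
    have hf3 := hInt_L.const_mul ((1-2*q)*ε^3)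
    have hf4 := hInt_G.const_mul ((1-q)*ε^5)
    have s1 : (∫ x in Ω, ((1/ε) * W (-(ε^2) * lap v x + v x) - ε * q * gradSq v x
          + (1 - 2*q) * ε^3 * (lap v x)^2 + (1 - q) * ε^5 * gradLapSq v x)) =
        (∫ x in Ω, ((1/ε) * W (-(ε^2) * lap v x + v x) - ε * q * gradSq v x
          + (1 - 2*q) * ε^3 * (lap v x)^2)) + ∫ x in Ω, (1 - q) * ε^5 * gradLapSq v x :=
      integral_add ((hf1.sub hf2).add hf3) hf4
    have s2 : (∫ x in Ω, ((1/ε) * W (-(ε^2) * lap v x + v x) - ε * q * gradSq v x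
          + (1 - 2*q) * ε^3 * (lap v x)^2)) =
        (∫ x in Ω, ((1/ε) * W (-(ε^2) * lap v x + v x) - ε * q * gradSq v x))
          + ∫ x in Ω, (1 - 2*q) * ε^3 * (lap v x)^2 :=
      integral_add (hf1.sub hf2) hf3
    have s3 : (∫ x in Ω, ((1/ε) * W (-(ε^2) * lap v x + v x) - ε * q * gradSq v x)) =
        (∫ x in Ω, (1/ε) * W (-(ε^2) * lap v x + v x)) - ∫ x in Ω, ε * q * gradSq v x :=
      integral_sub hf1 hf2
    rw [FepsOn, s1, s2, s3, integral_const_mul, integral_const_mul, integral_const_mul,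
      integral_const_mul]
  have hI : IepsOn W ε v Ω =
      1/ε*(∫ x in Ω, W (v x)) + ε*(∫ x in Ω, gradSq v x)
        + ε^3*(∫ x in Ω, hessSq v x) + ε^5*(∫ x in Ω, gradLapSq v x) := by
    have hf1 := hInt_a.const_mul (1/ε)
    have hf2 := hInt_b.const_mul ε
    have hf3 := hInt_h.const_mul (ε^3)
    have hf4 := hInt_G.const_mul (ε^5)
    have s1 : (∫ x in Ω, ((1/ε) * W (v x) + ε * gradSq v x + ε^3 * hessSq v x
          + ε^5 * gradLapSq v x)) =
        (∫ x in Ω, ((1/ε) * W (v x) + ε * gradSq v x + ε^3 * hessSq v x))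
          + ∫ x in Ω, ε^5 * gradLapSq v x :=
      integral_add ((hf1.add hf2).add hf3) hf4
    have s2 : (∫ x in Ω, ((1/ε) * W (v x) + ε * gradSq v x + ε^3 * hessSq v x)) =
        (∫ x in Ω, ((1/ε) * W (v x) + ε * gradSq v x)) + ∫ x in Ω, ε^3 * hessSq v x :=
      integral_add (hf1.add hf2) hf3
    have s3 : (∫ x in Ω, ((1/ε) * W (v x) + ε * gradSq v x)) =
        (∫ x in Ω, (1/ε) * W (v x)) + ∫ x in Ω, ε * gradSq v x :=
      integral_add hf1 hf2
    rw [IepsOn, s1, s2, s3, integral_const_mul, integral_const_mul, integral_const_mul,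
      integral_const_mul]
  -- the inequalities feeding the arithmetic lemma
  have h1 : (∫ x in Ω, W (v x)) ≤ 3/2*(∫ x in Ω, W (-(ε^2) * lap v x + v x))
      + ((Cw^2+Kw)/2*ε^4)*(∫ x in Ω, (lap v x)^2) := by
    have hg : Integrable (fun x => 3/2 * W (-(ε^2) * lap v x + v x)
        + ((Cw^2+Kw)/2*ε^4)*(lap v x)^2) (volume.restrict Ω) :=
      (hInt_A.const_mul _).add (hInt_L.const_mul _)
    have hmono := integral_mono hInt_a hg (fun x => ?_)
    · rw [integral_add (hInt_A.const_mul _) (hInt_L.const_mul _), integral_const_mul,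
        integral_const_mul] at hmono
      exact hmono
    · have h := dw_upper hW (v x) (-(ε^2) * lap v x + v x)
      have e : (v x - (-(ε^2) * lap v x + v x))^2 = ε^4*(lap v x)^2 := by ring
      rw [e] at h
      simp only []
      linarith
  have h2 : qstar * (ε*(∫ x in Ω, gradSq v x)) ≤
      (∫ x in Ω, W (v x))/ε + ε^3*(∫ x in Ω, hessSq v x) := by
    have hint := hinterp ε hε hεe0 v hv2
    rw [integral_const_mul, integral_add (hInt_a.div_const ε) (hInt_h.const_mul (ε^3)),
      integral_div, integral_const_mul] at hint
    exact hint
  have h3 := helliptic v hv2 hNB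
  have h4 : (∫ x in Ω, (v x)^2) ≤ 2/cw*(∫ x in Ω, W (v x)) + 2*(volume Ω).toReal := by
    have hg : Integrable (fun x => 2/cw * W (v x) + 2) (volume.restrict Ω) :=
      (hInt_a.const_mul _).add (integrable_const _)
    have hmono := integral_mono hInt_v2 hg (fun x => dw_sq_le hW (v x))
    rw [integral_add (hInt_a.const_mul _) (integrable_const _), integral_const_mul,
      setIntegral_const, smul_eq_mul, measureReal_def] at hmono
    linarith
  have hε4 : CΩ*ε^4 ≤ cw/12 := by
    have htp : t0^(4:ℕ) = cw/(12*CΩ) := by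
      rw [ht0, ← Real.rpow_natCast ((cw/(12*CΩ))^((1:ℝ)/4)) 4,
        ← Real.rpow_mul (by positivity : (0:ℝ) ≤ cw/(12*CΩ))]
      norm_num
    have h4' : ε^(4:ℕ) ≤ cw/(12*CΩ) := htp ▸ pow_le_pow_left₀ hε.le hεt0 4
    calc CΩ*ε^4 ≤ CΩ*(cw/(12*CΩ)) := mul_le_mul_of_nonneg_left h4' hCΩ.le
      _ = cw/12 := by field_simp
  -- nonnegativity
  have hA0 : 0 ≤ ∫ x in Ω, W (-(ε^2) * lap v x + v x) :=
    integral_nonneg fun x => dw_nonneg hW _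
  have ha0 : 0 ≤ ∫ x in Ω, W (v x) := integral_nonneg fun x => dw_nonneg hW _
  have hb0 : 0 ≤ ∫ x in Ω, gradSq v x :=
    integral_nonneg fun x => by rw [gradSq]; positivity
  have hh0 : 0 ≤ ∫ x in Ω, hessSq v x :=
    integral_nonneg fun x => by rw [hessSq]; positivity
  have hL0 : 0 ≤ ∫ x in Ω, (lap v x)^2 := integral_nonneg fun x => sq_nonneg _
  have hG0 : 0 ≤ ∫ x in Ω, gradLapSq v x :=
    integral_nonneg fun x => by rw [gradLapSq]; positivity
  have hV0 : 0 ≤ ∫ x in Ω, (v x)^2 := integral_nonneg fun x => sq_nonneg _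
  have hm0 : (0:ℝ) ≤ (volume Ω).toReal := ENNReal.toReal_nonneg
  rw [hF, hI]
  exact key_arith qstar q ε CΩ cw Kw Cw ((volume Ω).toReal) _ _ _ _ _ _ _
    hqs0 hqs1 hq hCΩ hcw hW.Kw_pos hε hq0 hm0 hA0 ha0 hb0 hh0 hL0 hG0 hV0
    h1 h2 h3 h4 hε4


end
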